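/- Let (V, R) be a connected unicyclic graph (|R| = |V|, containing exactly one cycle C), endowed with an orientation σ of its edges, and let v be a sink of σ. Then there exists a vertex u with out-degree at least 2 under σ such that depth(u) < max{1, depth(v)}, where depth(w) is the distance from w to the cycle C in (V, R). In particular, if depth(v) = 0, u can be chosen on C with both outgoing arcs along C. -/

import Mathlib

/-- Sink-degree lemma for unicyclic graphs: let `(V, R)` be a connected unicyclic
graph (as many edges as vertices) with cycle `c`, endowed with an orientation `σ`,
and let `v` be a sink of `σ`.  Then there is a vertex `u` with at least two outgoing
arcs whose depth (distance to the cycle) is less than `max 1 (depth v)`; moreover if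
`depth v = 0` then `u` can be chosen with both outgoing arcs along the cycle. -/
theorem sink_degree_lemma {V : Type*} [Fintype V] [DecidableEq V]
    (G : SimpleGraph V) [DecidableRel G.Adj]
    (hconn : G.Connected) (hcard : G.edgeFinset.card = Fintype.card V)
    (x : V) (c : G.Walk x x) (hc : c.IsCycle)
    (σ : V → V → Prop)
    (hsub : ∀ u v, σ u v → G.Adj u v)
    (hor : ∀ u v, G.Adj u v → (σ u v ↔ ¬ σ v u))
    (v : V) (hsink : ∀ w, ¬ σ v w)
    (depth : V → ℕ)
    (hdepth : ∀ w, IsLeast {d : ℕ | ∃ y ∈ c.support, G.dist w y = d} (depth w)) :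
    ∃ u : V, (∃ a b, a ≠ b ∧ σ u a ∧ σ u b) ∧ depth u < max 1 (depth v) ∧
      (depth v = 0 → ∃ a b, a ≠ b ∧ σ u a ∧ σ u b ∧
        s(u, a) ∈ c.edges ∧ s(u, b) ∈ c.edges) := by
  classical
  have hL3 : 3 ≤ c.length := hc.three_le_length
  -- depth is zero exactly on the support of the cycle
  have hdepth0 : ∀ w ∈ c.support, depth w = 0 := by
    intro w hw
    exact Nat.le_zero.mp ((hdepth w).2 ⟨w, hw, SimpleGraph.dist_self⟩)
  have hsupp0 : ∀ w, depth w = 0 → w ∈ c.support := by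
    intro w hw
    obtain ⟨y, hy, hdy⟩ := (hdepth w).1
    rw [hw] at hdy
    rwa [(hconn w y).dist_eq_zero_iff.mp hdy]
  -- every support element is in the tail of the support
  have hxtail : x ∈ c.support.tail := by
    rw [← c.support_tail_of_not_nil hc.not_nil]
    exact SimpleGraph.Walk.end_mem_support _
  have htail_mem : ∀ w ∈ c.support, w ∈ c.support.tail := by
    intro w hw
    rw [c.support_eq_cons, List.mem_cons] at hw
    rcases hw with rfl | h
    · exact hxtail
    · exact h
  -- endpoints of edges of the cycle lie in the support
  have hedge_supp : ∀ e ∈ c.edges, ∀ z : V, z ∈ e → z ∈ c.support := by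
    intro e he
    induction e using Sym2.ind with
    | _ a b =>
      intro z hz
      rcases Sym2.mem_iff.mp hz with rfl | rfl
      · exact c.fst_mem_support_of_mem_edges he
      · exact c.snd_mem_support_of_mem_edges he
  -- tail-of-arc function: each edge gets an orientation
  have hex : ∀ e : Sym2 V, ∃ p : V × V, e ∈ G.edgeSet → (e = s(p.1, p.2) ∧ σ p.1 p.2) := by
    intro e
    induction e using Sym2.ind with
    | _ a b =>
      by_cases he : G.Adj a b
      · by_cases hab : σ a b
        · exact ⟨(a, b), fun _ => ⟨rfl, hab⟩⟩
        · have hba : σ b a := (hor b a he.symm).mpr hab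
          exact ⟨(b, a), fun _ => ⟨Sym2.eq_swap, hba⟩⟩
      · exact ⟨(v, v), fun h => absurd h he⟩
  choose tl htl using hex
  -- uniqueness of the tail
  have htl_eq : ∀ a b : V, σ a b → tl s(a, b) = (a, b) := by
    intro a b hab
    have hadj : G.Adj a b := hsub a b hab
    obtain ⟨h1, h2⟩ := htl s(a, b) hadj
    rcases Sym2.eq_iff.mp h1 with ⟨ha, hb⟩ | ⟨ha, hb⟩
    · exact Prod.ext ha.symm hb.symm
    · exfalso
      exact (hor a b hadj).mp hab (by rw [← ha, ← hb] at h2; exact h2)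
  have htail_len : c.support.tail.length = c.edges.length := by
    rw [List.length_tail, c.length_support, c.length_edges]
    omega
  rcases Nat.eq_zero_or_pos (depth v) with hv0 | hv1
  · -- v lies on the cycle; pigeonhole on cycle edges
    have hvsupp : v ∈ c.support := hsupp0 v hv0
    set T : Finset V := c.support.tail.toFinset with hT
    set E : Finset (Sym2 V) := c.edges.toFinset with hE
    have hTcard : T.card = c.length := by
      rw [hT, List.toFinset_card_of_nodup hc.2, List.length_tail, c.length_support]
      omega
    have hEcard : E.card = c.length := by
      rw [hE, List.toFinset_card_of_nodup hc.edges_nodup, c.length_edges]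
    have hvT : v ∈ T := List.mem_toFinset.mpr (htail_mem v hvsupp)
    have hmaps : ∀ e ∈ E, (tl e).1 ∈ T.erase v := by
      intro e heE
      have he : e ∈ c.edges := List.mem_toFinset.mp heE
      obtain ⟨h1, h2⟩ := htl e (c.edges_subset_edgeSet he)
      have hmem : (tl e).1 ∈ c.support := by
        apply hedge_supp e he
        nth_rewrite 1 [h1]
        exact Sym2.mem_mk_left _ _
      refine Finset.mem_erase.mpr ⟨?_, List.mem_toFinset.mpr (htail_mem _ hmem)⟩
      intro hcon
      exact hsink (tl e).2 (hcon ▸ h2)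
    have hlt : (T.erase v).card < E.card := by
      rw [Finset.card_erase_of_mem hvT, hTcard, hEcard]; omega
    obtain ⟨e₁, he₁, e₂, he₂, hne, heq⟩ :=
      Finset.exists_ne_map_eq_of_card_lt_of_maps_to hlt hmaps
    obtain ⟨h11, h12⟩ := htl e₁ (c.edges_subset_edgeSet (List.mem_toFinset.mp he₁))
    obtain ⟨h21, h22⟩ := htl e₂ (c.edges_subset_edgeSet (List.mem_toFinset.mp he₂))
    set u := (tl e₁).1
    set a := (tl e₁).2
    set b := (tl e₂).2
    have hub : σ u b := heq ▸ h22
    have he₂' : e₂ = s(u, b) := by rw [h21, heq]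
    have hab : a ≠ b := by
      intro h
      apply hne
      rw [h11, he₂', h]
    have hu0 : depth u = 0 := hdepth0 u (by
      apply hedge_supp e₁ (List.mem_toFinset.mp he₁)
      rw [h11]
      exact Sym2.mem_mk_left _ _)
    refine ⟨u, ⟨a, b, hab, h12, hub⟩, ?_, fun _ => ⟨a, b, hab, h12, hub, ?_, ?_⟩⟩
    · rw [hu0]; exact lt_of_lt_of_le Nat.zero_lt_one (le_max_left _ _)
    · rw [← h11]; exact List.mem_toFinset.mp he₁
    · rw [← he₂']; exact List.mem_toFinset.mp he₂
  · -- v is off the cycle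
    have hmax : max 1 (depth v) = depth v := max_eq_right hv1
    -- parent function
    have hparex : ∀ w : V, ∃ p : V, 0 < depth w → G.Adj w p ∧ depth p < depth w := by
      intro w
      by_cases h : 0 < depth w
      · obtain ⟨y, hy, hdy⟩ := (hdepth w).1
        obtain ⟨pth, hlen⟩ := (hconn w y).exists_walk_length_eq_dist
        cases pth with
        | nil =>
          rw [SimpleGraph.Walk.length_nil] at hlen
          omega
        | @cons _ p _ hadj q =>
          refine ⟨p, fun _ => ⟨hadj, ?_⟩⟩
          have hq : G.dist p y ≤ q.length := SimpleGraph.dist_le q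
          have hdp : depth p ≤ G.dist p y := (hdepth p).2 ⟨y, hy, rfl⟩
          simp only [SimpleGraph.Walk.length_cons] at hlen
          omega
      · exact ⟨w, fun h' => absurd h' h⟩
    choose par hpar using hparex
    set Dv := depth v with hDv
    set S : Finset V := Finset.univ.filter (fun w => depth w < Dv) with hS
    have hpv : G.Adj v (par v) ∧ depth (par v) < depth v := hpar v hv1
    set p := par v
    have hσpv : σ p v := (hor p v hpv.1.symm).mpr (hsink p)
    set ES : Finset (Sym2 V) := G.edgeFinset.filter (fun e => ∀ w ∈ e, depth w < Dv) with hES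
    -- injection from S into ES
    set ψ : V → Sym2 V := fun w =>
      if depth w = 0 then c.edges.getD (c.support.tail.idxOf w) s(x, x) else s(w, par w)
      with hψ
    have hψ0 : ∀ w, depth w = 0 → ∃ h : c.support.tail.idxOf w < c.edges.length,
        ψ w = c.edges[c.support.tail.idxOf w] := by
      intro w hw
      have hmem : w ∈ c.support.tail := htail_mem w (hsupp0 w hw)
      have hidx : c.support.tail.idxOf w < c.edges.length :=
        htail_len ▸ List.idxOf_lt_length_iff.mpr hmem
      refine ⟨hidx, ?_⟩
      simp only [hψ]
      rw [if_pos hw]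
      exact List.getD_eq_getElem _ _ hidx
    have hψ1 : ∀ w, ¬ depth w = 0 → ψ w = s(w, par w) := by
      intro w hw
      simp only [hψ]
      rw [if_neg hw]
    have hψ_mem : ∀ w ∈ S, ψ w ∈ ES := by
      intro w hw
      have hwS : depth w < Dv := (Finset.mem_filter.mp hw).2
      by_cases h0 : depth w = 0
      · obtain ⟨hidx, hval⟩ := hψ0 w h0
        have hedge : ψ w ∈ c.edges := hval ▸ List.getElem_mem hidx
        refine Finset.mem_filter.mpr ⟨?_, ?_⟩
        · exact SimpleGraph.mem_edgeFinset.mpr (c.edges_subset_edgeSet hedge)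
        · intro z hz
          rw [hdepth0 z (hedge_supp _ hedge z hz)]
          omega
      · have hp := hpar w (Nat.pos_of_ne_zero h0)
        rw [hψ1 w h0]
        refine Finset.mem_filter.mpr ⟨SimpleGraph.mem_edgeFinset.mpr hp.1, ?_⟩
        intro z hz
        rcases Sym2.mem_iff.mp hz with rfl | rfl
        · exact hwS
        · omega
    have hψ_inj : Set.InjOn ψ S := by
      intro w hw w' hw' heq
      by_cases h0 : depth w = 0 <;> by_cases h0' : depth w' = 0
      · obtain ⟨hi, hv1'⟩ := hψ0 w h0
        obtain ⟨hi', hv2'⟩ := hψ0 w' h0'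
        have hieq : c.support.tail.idxOf w = c.support.tail.idxOf w' :=
          hc.edges_nodup.getElem_inj_iff.mp (by rw [← hv1', ← hv2', heq])
        have hw1 : w ∈ c.support.tail := htail_mem w (hsupp0 w h0)
        have hw2 : w' ∈ c.support.tail := htail_mem w' (hsupp0 w' h0')
        calc w = c.support.tail[c.support.tail.idxOf w]'(List.idxOf_lt_length_iff.mpr hw1) :=
              (List.getElem_idxOf _).symm
          _ = c.support.tail[c.support.tail.idxOf w']'(List.idxOf_lt_length_iff.mpr hw2) := by
              congr 1
          _ = w' := List.getElem_idxOf _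
      · exfalso
        obtain ⟨hi, hv1'⟩ := hψ0 w h0
        have hedge : ψ w ∈ c.edges := hv1' ▸ List.getElem_mem hi
        have hw'supp : w' ∈ c.support := by
          apply hedge_supp _ hedge
          rw [heq, hψ1 w' h0']
          exact Sym2.mem_mk_left _ _
        exact h0' (hdepth0 w' hw'supp)
      · exfalso
        obtain ⟨hi, hv2'⟩ := hψ0 w' h0'
        have hedge : ψ w' ∈ c.edges := hv2' ▸ List.getElem_mem hi
        have hwsupp : w ∈ c.support := by
          apply hedge_supp _ hedge
          rw [← heq, hψ1 w h0]
          exact Sym2.mem_mk_left _ _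
        exact h0 (hdepth0 w hwsupp)
      · rw [hψ1 w h0, hψ1 w' h0'] at heq
        rcases Sym2.eq_iff.mp heq with ⟨h, _⟩ | ⟨h1', h2'⟩
        · exact h
        · exfalso
          have hp1 := (hpar w (Nat.pos_of_ne_zero h0)).2
          have hp2 := (hpar w' (Nat.pos_of_ne_zero h0')).2
          rw [h2'] at hp1
          rw [← h1'] at hp2
          omega
    have hcardS : S.card ≤ ES.card := Finset.card_le_card_of_injOn ψ hψ_mem hψ_inj
    -- add the crossing edge s(p, v)
    have hpvES : s(p, v) ∉ ES := by
      intro h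
      have := (Finset.mem_filter.mp h).2 v (Sym2.mem_mk_right _ _)
      omega
    set E' : Finset (Sym2 V) := insert s(p, v) ES with hE'
    have hE'card : ES.card + 1 = E'.card := (Finset.card_insert_of_notMem hpvES).symm
    have hmaps : ∀ e ∈ E', (tl e).1 ∈ S := by
      intro e he
      rcases Finset.mem_insert.mp he with rfl | heES
      · rw [htl_eq p v hσpv]
        exact Finset.mem_filter.mpr ⟨Finset.mem_univ _, hpv.2⟩
      · obtain ⟨h1, h2⟩ := htl e (SimpleGraph.mem_edgeFinset.mp (Finset.mem_filter.mp heES).1)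
        have : depth (tl e).1 < Dv := by
          apply (Finset.mem_filter.mp heES).2
          nth_rewrite 1 [h1]
          exact Sym2.mem_mk_left _ _
        exact Finset.mem_filter.mpr ⟨Finset.mem_univ _, this⟩
    have hlt : S.card < E'.card := by omega
    obtain ⟨e₁, he₁, e₂, he₂, hne, heq⟩ :=
      Finset.exists_ne_map_eq_of_card_lt_of_maps_to hlt hmaps
    have hE'sub : ∀ e ∈ E', e ∈ G.edgeSet := by
      intro e he
      rcases Finset.mem_insert.mp he with rfl | heES
      · exact hpv.1.symm
      · exact SimpleGraph.mem_edgeFinset.mp (Finset.mem_filter.mp heES).1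
    obtain ⟨h11, h12⟩ := htl e₁ (hE'sub e₁ he₁)
    obtain ⟨h21, h22⟩ := htl e₂ (hE'sub e₂ he₂)
    set u := (tl e₁).1
    set a := (tl e₁).2
    set b := (tl e₂).2
    have hub : σ u b := heq ▸ h22
    have he₂' : e₂ = s(u, b) := by rw [h21, heq]
    have hab : a ≠ b := by
      intro h
      apply hne
      rw [h11, he₂', h]
    have huS : depth u < Dv := (Finset.mem_filter.mp (hmaps e₁ he₁)).2
    refine ⟨u, ⟨a, b, hab, h12, hub⟩, ?_, fun h => absurd h (by omega)⟩
    rw [hmax]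
    exact huS
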